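/- arXiv:1603.05378 — 2 statements merged into one kernel-verified Lean document; each statement's English description precedes it below -/
import Mathlib

section
/- (Grötzsch's inequality for rectangles) Let R = [0,a]×[0,b] and R' = [0,a']×[0,b'] be rectangles, and let f : R → R' be a continuously differentiable bijection mapping the sides {x=0},{x=a},{y=0},{y=b} onto the corresponding sides {x=0},{x=a'},{y=0},{y=b'} respectively. If the dilatation quotient of f is at most K everywhere, then (a'/b')/(a/b) ≤ K. -/
open Complex MeasureTheory Set

lemma det_formula' (T : ℂ →L[ℝ] ℂ) :
    T.det = (T 1).re * (T I).im - (T I).re * (T 1).im := by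
  have h : T.det = LinearMap.det (T : ℂ →ₗ[ℝ] ℂ) := rfl
  rw [h, ← LinearMap.det_toMatrix Complex.basisOneI, Matrix.det_fin_two]
  simp [LinearMap.toMatrix_apply, Complex.coe_basisOneI_repr, Complex.coe_basisOneI]

lemma apply_eq' (T : ℂ →L[ℝ] ℂ) (u : ℂ) : T u = u.re • T 1 + u.im • T I := by
  have h : u = u.re • (1:ℂ) + u.im • I := by
    simp [Complex.real_smul, Complex.re_add_im]
  conv_lhs => rw [h]
  rw [map_add, T.map_smul, T.map_smul]

lemma area_eq' (T : ℂ →L[ℝ] ℂ) (u v : ℂ) :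
    ((starRingEnd ℂ) (T u) * T v).im = T.det * ((starRingEnd ℂ) u * v).im := by
  rw [apply_eq' T u, apply_eq' T v, det_formula']
  simp [Complex.mul_im, Complex.smul_re, Complex.smul_im]
  ring

lemma norm_le_det_mul_norm_symm (D : ℂ ≃L[ℝ] ℂ) :
    ‖(D : ℂ →L[ℝ] ℂ)‖ ≤ |(D : ℂ →L[ℝ] ℂ).det| * ‖(D.symm : ℂ →L[ℝ] ℂ)‖ := by
  set T := (D : ℂ →L[ℝ] ℂ) with hT
  set S := (D.symm : ℂ →L[ℝ] ℂ) with hS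
  apply ContinuousLinearMap.opNorm_le_bound _ (by positivity)
  intro z
  by_cases h0 : T z = 0
  · simp [h0]; positivity
  set u := S (I * T z) with hu
  have h1 : T u = I * T z := D.apply_symm_apply _
  have key : ‖T z‖^2 = T.det * ((starRingEnd ℂ) z * u).im := by
    have h2 := area_eq' T z u
    rw [h1] at h2
    have h3 : ((starRingEnd ℂ) (T z) * (I * T z)).im = ‖T z‖^2 := by
      have h4 : (starRingEnd ℂ) (T z) * (I * T z) = I * ((starRingEnd ℂ) (T z) * T z) := by
        ring
      rw [h4, Complex.conj_mul']
      simp [Complex.mul_im, sq]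
    rw [h3] at h2
    exact h2
  have hIu : ‖u‖ ≤ ‖S‖ * ‖T z‖ := by
    have h5 := S.le_opNorm (I * T z)
    simpa [norm_mul] using h5
  have him : |((starRingEnd ℂ) z * u).im| ≤ ‖z‖ * (‖S‖ * ‖T z‖) := by
    calc |((starRingEnd ℂ) z * u).im| ≤ ‖(starRingEnd ℂ) z * u‖ :=
          Complex.abs_im_le_norm _
      _ = ‖z‖ * ‖u‖ := by rw [norm_mul]; simp
      _ ≤ ‖z‖ * (‖S‖ * ‖T z‖) := mul_le_mul_of_nonneg_left hIu (norm_nonneg z)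
  have hfin : ‖T z‖^2 ≤ |T.det| * (‖z‖ * (‖S‖ * ‖T z‖)) := by
    rw [key]
    calc T.det * ((starRingEnd ℂ) z * u).im ≤ |T.det * ((starRingEnd ℂ) z * u).im| :=
          le_abs_self _
      _ = |T.det| * |((starRingEnd ℂ) z * u).im| := abs_mul _ _
      _ ≤ |T.det| * (‖z‖ * (‖S‖ * ‖T z‖)) := mul_le_mul_of_nonneg_left him (abs_nonneg _)
  have hTz : 0 < ‖T z‖ := norm_pos_iff.mpr h0
  nlinarith [hfin, hTz]

/-- Cauchy–Schwarz for set integrals on a finite measure. -/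
lemma cs_integral {μ : Measure ℂ} [IsFiniteMeasure μ] {g : ℂ → ℝ}
    (hg : Integrable g μ) (hg2 : Integrable (fun z => g z^2) μ) :
    (∫ z, g z ∂μ)^2 ≤ (μ Set.univ).toReal * ∫ z, g z^2 ∂μ := by
  set m := (μ Set.univ).toReal with hm
  have hm0 : 0 ≤ m := ENNReal.toReal_nonneg
  set c := ∫ z, g z ∂μ with hc
  have h0 : 0 ≤ ∫ z, (m * g z - c)^2 ∂μ := integral_nonneg fun z => sq_nonneg _
  have hexp : (fun z => (m * g z - c)^2)
      = fun z => (m^2 * g z^2 - (2*m*c) * g z) + c^2 := by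
    funext z; ring
  have e1 : Integrable (fun z => m^2 * g z^2 - (2*m*c) * g z) μ :=
    (hg2.const_mul _).sub (hg.const_mul _)
  rw [hexp, integral_add e1 (integrable_const _),
    integral_sub (hg2.const_mul _) (hg.const_mul _),
    integral_const_mul, integral_const_mul, integral_const, smul_eq_mul, measureReal_def, ← hm] at h0
  have hI2 : 0 ≤ ∫ z, g z^2 ∂μ := integral_nonneg fun z => sq_nonneg _
  rcases eq_or_lt_of_le hm0 with hme | hmpos
  · have hμ : μ = 0 := by
      have hfin : μ Set.univ ≠ ⊤ := measure_ne_top μ _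
      have h1 : (μ Set.univ).toReal = 0 := hme.symm
      have h2 : μ Set.univ = 0 := ((ENNReal.toReal_eq_zero_iff _).mp h1).resolve_right hfin
      exact Measure.measure_univ_eq_zero.mp h2
    simp [hc, hμ]
  · have key : m * c^2 ≤ m * (m * ∫ z, g z^2 ∂μ) := by nlinarith [h0]
    exact le_of_mul_le_mul_left (by linarith [key]) hmpos

/-- Grötzsch's inequality: a C¹ side-respecting bijection between the rectangles
`[0,a]×[0,b]` and `[0,a']×[0,b']` whose dilatation quotient is everywhere `≤ K`
satisfies `(a'/b')/(a/b) ≤ K`. -/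
theorem stmt5 (a b a' b' K : ℝ) (ha : 0 < a) (hb : 0 < b) (ha' : 0 < a') (hb' : 0 < b')
    (f : ℂ → ℂ)
    (R : Set ℂ) (hR : R = {z : ℂ | z.re ∈ Set.Icc 0 a ∧ z.im ∈ Set.Icc 0 b})
    (R' : Set ℂ) (hR' : R' = {z : ℂ | z.re ∈ Set.Icc 0 a' ∧ z.im ∈ Set.Icc 0 b'})
    (hC1 : ContDiffOn ℝ 1 f R)
    (hbij : Set.BijOn f R R')
    (hs1 : ∀ z ∈ R, z.re = 0 → (f z).re = 0)
    (hs2 : ∀ z ∈ R, z.re = a → (f z).re = a')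
    (hs3 : ∀ z ∈ R, z.im = 0 → (f z).im = 0)
    (hs4 : ∀ z ∈ R, z.im = b → (f z).im = b')
    (hdil : ∀ z ∈ R, ∃ D : ℂ ≃L[ℝ] ℂ,
      HasFDerivWithinAt f (D : ℂ →L[ℝ] ℂ) R z ∧
        ‖(D : ℂ →L[ℝ] ℂ)‖ * ‖(D.symm : ℂ →L[ℝ] ℂ)‖ ≤ K) :
    (a' / b') / (a / b) ≤ K := by
  -- basic structure of R
  have hRprod : R = Set.Icc (0:ℝ) a ×ℂ Set.Icc (0:ℝ) b := by
    rw [hR]; ext z; simp [Complex.mem_reProdIm]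
  have hR'prod : R' = Set.Icc (0:ℝ) a' ×ℂ Set.Icc (0:ℝ) b' := by
    rw [hR']; ext z; simp [Complex.mem_reProdIm]
  have hRclosed : IsClosed R := by
    rw [hRprod]; exact isClosed_Icc.reProdIm isClosed_Icc
  have hRmeas : MeasurableSet R := hRclosed.measurableSet
  have hRcompact : IsCompact R := by
    rw [hRprod]
    rw [Metric.isCompact_iff_isClosed_bounded]
    exact ⟨isClosed_Icc.reProdIm isClosed_Icc,
      (Metric.isBounded_Icc _ _).reProdIm (Metric.isBounded_Icc _ _)⟩
  have hconv : Convex ℝ R := by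
    rw [hR]
    exact ((convex_Icc (0:ℝ) a).linear_preimage Complex.reLm).inter
      ((convex_Icc (0:ℝ) b).linear_preimage Complex.imLm)
  have hint : (interior R).Nonempty := by
    refine ⟨⟨a/2, b/2⟩, ?_⟩
    simp only [hRprod, interior_reProdIm, interior_Icc, Complex.mem_reProdIm, Set.mem_Ioo]
    exact ⟨⟨half_pos ha, half_lt_self ha⟩, ⟨half_pos hb, half_lt_self hb⟩⟩
  have hu : UniqueDiffOn ℝ R := uniqueDiffOn_convex hconv hint
  -- derivative function
  set f' : ℂ → ℂ →L[ℝ] ℂ := fun z => fderivWithin ℝ f R z with hf'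
  have hder : ∀ z ∈ R, HasFDerivWithinAt f (f' z) R z := by
    intro z hz
    obtain ⟨D, hD, -⟩ := hdil z hz
    have : f' z = (D : ℂ →L[ℝ] ℂ) := hD.fderivWithin (hu z hz)
    rw [this]; exact hD
  have hsq : ∀ z ∈ R, ‖f' z 1‖^2 ≤ K * |(f' z).det| := by
    intro z hz
    obtain ⟨D, hD, hK⟩ := hdil z hz
    have hDz : f' z = (D : ℂ →L[ℝ] ℂ) := hD.fderivWithin (hu z hz)
    rw [hDz]
    have h1 : ‖(D : ℂ →L[ℝ] ℂ) 1‖ ≤ ‖(D : ℂ →L[ℝ] ℂ)‖ := by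
      simpa using (D : ℂ →L[ℝ] ℂ).le_opNorm 1
    have h2 := norm_le_det_mul_norm_symm D
    have h3 : (0:ℝ) ≤ ‖(D : ℂ →L[ℝ] ℂ)‖ := norm_nonneg _
    have h4 : (0:ℝ) ≤ ‖(D.symm : ℂ →L[ℝ] ℂ)‖ := norm_nonneg _
    have h5 : (0:ℝ) ≤ |(D : ℂ →L[ℝ] ℂ).det| := abs_nonneg _
    nlinarith [norm_nonneg ((D : ℂ →L[ℝ] ℂ) 1)]
  -- continuity of the derivative
  have hcontf' : ContinuousOn f' R := hC1.continuousOn_fderivWithin hu le_rfl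
  set g : ℂ → ℝ := fun z => ‖f' z 1‖ with hg
  have hcontg : ContinuousOn g R := by
    apply ContinuousOn.norm
    exact (ContinuousLinearMap.apply ℝ ℂ (1:ℂ)).continuous.comp_continuousOn hcontf'
  have hgnonneg : ∀ z, 0 ≤ g z := fun z => norm_nonneg _
  -- volumes
  have hvol_rect : ∀ (s t : Set ℝ), MeasurableSet s → MeasurableSet t →
      volume (s ×ℂ t) = volume s * volume t := by
    intro s t hs ht
    have hpre : s ×ℂ t = Complex.measurableEquivRealProd ⁻¹' (s ×ˢ t) := by
      ext z
      simp [Complex.mem_reProdIm, Complex.measurableEquivRealProd_apply, Set.mem_prod]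
    rw [hpre,
      Complex.volume_preserving_equiv_real_prod.measure_preimage (hs.prod ht).nullMeasurableSet,
      Measure.volume_eq_prod, Measure.prod_prod]
  have hvolR : volume R = ENNReal.ofReal a * ENNReal.ofReal b := by
    rw [hRprod, hvol_rect _ _ measurableSet_Icc measurableSet_Icc]
    simp [Real.volume_Icc]
  have hvolR' : volume R' = ENNReal.ofReal a' * ENNReal.ofReal b' := by
    rw [hR'prod, hvol_rect _ _ measurableSet_Icc measurableSet_Icc]
    simp [Real.volume_Icc]
  -- integrability
  have hintg : IntegrableOn g R := hcontg.integrableOn_compact hRcompact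
  have hintg2 : IntegrableOn (fun z => g z^2) R :=
    (hcontg.pow 2).integrableOn_compact hRcompact
  have hcontdet : ContinuousOn (fun z => |(f' z).det|) R :=
    (ContinuousLinearMap.continuous_det.comp_continuousOn hcontf').abs
  have hintdet : IntegrableOn (fun z => |(f' z).det|) R :=
    hcontdet.integrableOn_compact hRcompact
  -- change of variables : ∫_R |det f'| = a' * b'
  have hdet_int : ∫ z in R, |(f' z).det| = a' * b' := by
    have hlin : ∫⁻ z in R, ENNReal.ofReal |(f' z).det| = volume R' := by
      rw [← hbij.image_eq]
      exact lintegral_abs_det_fderiv_eq_addHaar_image volume hRmeas hder hbij.injOn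
    rw [integral_eq_lintegral_of_nonneg_ae
        (Filter.Eventually.of_forall fun z => abs_nonneg _)
        (hcontdet.aestronglyMeasurable hRmeas), hlin, hvolR', ENNReal.toReal_mul,
      ENNReal.toReal_ofReal ha'.le, ENNReal.toReal_ofReal hb'.le]
  -- upper bound for ∫ g²
  have hI2 : ∫ z in R, g z^2 ≤ K * (a' * b') := by
    have h1 : ∫ z in R, g z^2 ≤ ∫ z in R, K * |(f' z).det| := by
      apply setIntegral_mono_on hintg2 (hintdet.const_mul K) hRmeas
      intro z hz; exact hsq z hz
    rw [integral_const_mul, hdet_int] at h1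
    exact h1
  -- lower bound : a' * b ≤ ∫_R g
  have hI1 : a' * b ≤ ∫ z in R, g z := by
    set s : Set ℝ := Set.Icc 0 a with hs
    set t : Set ℝ := Set.Icc 0 b with ht
    set G : ℝ × ℝ → ℝ := fun p => g (↑p.1 + ↑p.2 * I) with hG
    have hmapsto : Set.MapsTo (fun p : ℝ × ℝ => (↑p.1 + ↑p.2 * I : ℂ)) (s ×ˢ t) R := by
      intro p hp
      rw [hR]
      have h1 := hp.1
      have h2 := hp.2
      rw [hs] at h1
      rw [ht] at h2
      constructor
      · simpa [hs] using h1
      · simpa [ht] using h2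
    have hcont_emb : Continuous fun p : ℝ × ℝ => (↑p.1 + ↑p.2 * I : ℂ) :=
      (Complex.continuous_ofReal.comp continuous_fst).add
        ((Complex.continuous_ofReal.comp continuous_snd).mul continuous_const)
    have hGcont : ContinuousOn G (s ×ˢ t) :=
      hcontg.comp hcont_emb.continuousOn hmapsto
    have hGint : IntegrableOn G (s ×ˢ t) :=
      hGcont.integrableOn_compact ((isCompact_Icc).prod (isCompact_Icc))
    have hGint' : Integrable G ((volume.restrict s).prod (volume.restrict t)) := by
      rwa [Measure.prod_restrict, ← Measure.volume_eq_prod]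
    -- transfer the set integral over R to the product
    have hpreim : (Complex.measurableEquivRealProd.symm) ⁻¹' R = s ×ˢ t := by
      ext p
      rw [hR]
      simp [Complex.measurableEquivRealProd_symm_apply, Set.mem_prod]
    have htransfer : ∫ z in R, g z = ∫ p in s ×ˢ t, G p := by
      have heq := (Complex.volume_preserving_equiv_real_prod.symm _).setIntegral_preimage_emb
          (Complex.measurableEquivRealProd.symm.measurableEmbedding) g R
      rw [← heq, hpreim]
      apply setIntegral_congr_fun (measurableSet_Icc.prod measurableSet_Icc)
      intro p _
      show g (Complex.measurableEquivRealProd.symm p) = G p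
      rw [Complex.measurableEquivRealProd_symm_apply]
      congr 1
      exact (Complex.mk_eq_add_mul_I _ _)
    -- Fubini
    have hfub : ∫ p in s ×ˢ t, G p = ∫ y in t, ∫ x in s, G (x, y) := by
      rw [Measure.volume_eq_prod, ← Measure.prod_restrict]
      exact integral_prod_symm G hGint'
    -- inner bound from FTC
    have hinner : ∀ y ∈ t, a' ≤ ∫ x in s, G (x, y) := by
      intro y hy
      set ι : ℝ → ℂ := fun x => ↑x + ↑y * I with hι
      have hιmem : ∀ x ∈ s, ι x ∈ R := fun x hx => hmapsto (Set.mk_mem_prod hx hy)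
      have hιcont : Continuous ι := Complex.continuous_ofReal.add continuous_const
      have hφcont : ContinuousOn (fun x => (f (ι x)).re) s :=
        Complex.continuous_re.comp_continuousOn
          ((hC1.continuousOn).comp hιcont.continuousOn hιmem)
      have hcontd : ContinuousOn (fun x => f' (ι x) 1) s := by
        exact (ContinuousLinearMap.apply ℝ ℂ (1:ℂ)).continuous.comp_continuousOn
          (hcontf'.comp hιcont.continuousOn hιmem)
      have hint1 : IntervalIntegrable (fun x => (f' (ι x) 1).re) volume 0 a := by
        apply ContinuousOn.intervalIntegrable
        rw [Set.uIcc_of_le ha.le]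
        exact Complex.continuous_re.comp_continuousOn hcontd
      have hint2 : IntervalIntegrable (fun x => ‖f' (ι x) 1‖) volume 0 a := by
        apply ContinuousOn.intervalIntegrable
        rw [Set.uIcc_of_le ha.le]
        exact hcontd.norm
      have hderφ : ∀ x ∈ Set.Ioo (0:ℝ) a,
          HasDerivWithinAt (fun x => (f (ι x)).re) ((f' (ι x) 1).re) (Set.Ioi x) x := by
        intro x hx
        have h1 : HasDerivWithinAt ι 1 s x := by
          have h1' : HasDerivAt ι ((Complex.ofRealCLM : ℝ →L[ℝ] ℂ) 1) x :=
            (Complex.ofRealCLM.hasDerivAt).add_const (↑y * I)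
          simpa using h1'.hasDerivWithinAt
        have h2 : HasFDerivWithinAt f (f' (ι x)) R (ι x) :=
          hder _ (hιmem x ⟨hx.1.le, hx.2.le⟩)
        have h3 : HasDerivWithinAt (f ∘ ι) (f' (ι x) 1) s x :=
          h2.comp_hasDerivWithinAt x h1 hιmem
        have h4 : s ∈ nhdsWithin x (Set.Ioi x) :=
          Filter.mem_of_superset (Ioo_mem_nhdsGT_of_mem ⟨le_rfl, hx.2⟩)
            (fun u hu => ⟨(hx.1.trans hu.1).le, hu.2.le⟩)
        have h5 : HasDerivWithinAt (f ∘ ι) (f' (ι x) 1) (Set.Ioi x) x :=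
          h3.mono_of_mem_nhdsWithin h4
        exact (Complex.reCLM.hasFDerivAt).comp_hasDerivWithinAt x h5
      have hFTC := intervalIntegral.integral_eq_sub_of_hasDeriv_right_of_le ha.le
        hφcont hderφ hint1
      have hend : (f (ι a)).re = a' := by
        apply hs2 _ (hιmem a ⟨ha.le, le_rfl⟩)
        simp [hι]
      have hstart : (f (ι 0)).re = 0 := by
        apply hs1 _ (hιmem 0 ⟨le_rfl, ha.le⟩)
        simp [hι]
      have hFTC' : ∫ x in (0:ℝ)..a, (f' (ι x) 1).re = a' := by
        rw [hFTC, hend, hstart, sub_zero]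
      have hmono : ∫ x in (0:ℝ)..a, (f' (ι x) 1).re ≤ ∫ x in (0:ℝ)..a, ‖f' (ι x) 1‖ :=
        intervalIntegral.integral_mono_on ha.le hint1 hint2
          (fun x _ => Complex.re_le_norm _)
      have hconv2 : ∫ x in (0:ℝ)..a, ‖f' (ι x) 1‖ = ∫ x in s, G (x, y) := by
        rw [intervalIntegral.integral_of_le ha.le, hs, integral_Icc_eq_integral_Ioc]
      rw [← hconv2]
      rw [← hFTC']
      exact hmono
    -- integrate the inner bound over t
    have hInner_int : IntegrableOn (fun y => ∫ x in s, G (x, y)) t :=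
      hGint'.integral_prod_right
    have houter : a' * b ≤ ∫ y in t, ∫ x in s, G (x, y) := by
      have hconst : ∫ _ in t, a' = b * a' := by
        rw [setIntegral_const]
        simp [ht, Real.volume_Icc, ENNReal.toReal_ofReal hb.le]
        exact Or.inl hb.le
      calc a' * b = ∫ _ in t, a' := by rw [hconst]; ring
        _ ≤ ∫ y in t, ∫ x in s, G (x, y) :=
            setIntegral_mono_on (integrable_const _) hInner_int measurableSet_Icc hinner
    rw [htransfer, hfub]
    exact houter
  -- Cauchy Schwarz
  have hCS : (∫ z in R, g z)^2 ≤ (a*b) * ∫ z in R, g z^2 := by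
    have : IsFiniteMeasure (volume.restrict R) := by
      constructor
      rw [Measure.restrict_apply_univ, hvolR]
      exact ENNReal.mul_lt_top ENNReal.ofReal_lt_top ENNReal.ofReal_lt_top
    have h := cs_integral hintg hintg2
    rw [Measure.restrict_apply_univ, hvolR] at h
    have hab : (ENNReal.ofReal a * ENNReal.ofReal b).toReal = a * b := by
      rw [ENNReal.toReal_mul, ENNReal.toReal_ofReal ha.le, ENNReal.toReal_ofReal hb.le]
    rw [hab] at h
    exact h
  -- conclude
  have hgpos : 0 ≤ ∫ z in R, g z := setIntegral_nonneg hRmeas fun z _ => hgnonneg z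
  have hfinal : (a'*b)^2 ≤ (a*b) * (K * (a'*b')) := by
    calc (a'*b)^2 ≤ (∫ z in R, g z)^2 := by
          apply pow_le_pow_left₀ (by positivity) hI1
      _ ≤ (a*b) * ∫ z in R, g z^2 := hCS
      _ ≤ (a*b) * (K * (a'*b')) := by
          apply mul_le_mul_of_nonneg_left hI2 (by positivity)
  have hKbound : a' * b ≤ K * (a * b') := by
    have h' : (a'*b)*(a'*b) ≤ (K*(a*b'))*(a'*b) := by nlinarith [hfinal]
    exact le_of_mul_le_mul_right h' (by positivity)
  have heq : (a' / b') / (a / b) = (a' * b) / (a * b') := by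
    field_simp
  rw [heq, div_le_iff₀ (by positivity)]
  linarith [hKbound]
end

section
/- Among all C¹ diffeomorphisms between rectangles [0,a]×[0,b] and [0,a']×[0,b'] taking corresponding sides to corresponding sides, with a'/b' ≥ a/b, the affine map (x,y) ↦ ((a'/a)x, (b'/b)y) has the minimal possible supremum of the dilatation quotient, namely K = (a'/b')/(a/b). -/
open MeasureTheory Set Complex

namespace Stmt6Aux




noncomputable def ω (z w : ℂ) : ℝ := ((starRingEnd ℂ) z * w).im

lemma omega_abs_le (z w : ℂ) : |ω z w| ≤ ‖z‖ * ‖w‖ := by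
  calc |ω z w| ≤ ‖(starRingEnd ℂ) z * w‖ := Complex.abs_im_le_norm _
  _ = ‖z‖ * ‖w‖ := by simp [map_mul]

lemma omega_self (w : ℂ) : ω w (Complex.I * w) = ‖w‖ ^ 2 := by
  simp [ω, Complex.mul_im, Complex.conj_re, Complex.conj_im,
    Complex.sq_norm, Complex.normSq_apply]

lemma apply_eq (E : ℂ →L[ℝ] ℂ) (z : ℂ) : E z = z.re • E 1 + z.im • E Complex.I := by
  conv_lhs => rw [show z = z.re • (1:ℂ) + z.im • Complex.I by simp [Complex.ext_iff]]
  rw [map_add, _root_.map_smul, _root_.map_smul]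

lemma det_formula (E : ℂ →L[ℝ] ℂ) :
    E.det = (E 1).re * (E Complex.I).im - (E Complex.I).re * (E 1).im := by
  have h : (E : ℂ →ₗ[ℝ] ℂ).det =
      Matrix.det (LinearMap.toMatrix Complex.basisOneI Complex.basisOneI (E : ℂ →ₗ[ℝ] ℂ)) :=
    (LinearMap.det_toMatrix _ _).symm
  rw [ContinuousLinearMap.det, h, Matrix.det_fin_two]
  simp [LinearMap.toMatrix_apply]

lemma omega_E (E : ℂ →L[ℝ] ℂ) (z w : ℂ) : ω (E z) (E w) = E.det * ω z w := by
  rw [apply_eq E z, apply_eq E w, det_formula]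
  simp only [ω, Complex.mul_im, Complex.add_re, Complex.add_im, Complex.smul_re, Complex.smul_im,
    map_add, Complex.conj_re, Complex.conj_im, _root_.map_smul]
  ring_nf

lemma key (E : ℂ ≃L[ℝ] ℂ) :
    ‖(E : ℂ →L[ℝ] ℂ)‖ ≤ |(E : ℂ →L[ℝ] ℂ).det| * ‖(E.symm : ℂ →L[ℝ] ℂ)‖ := by
  apply ContinuousLinearMap.opNorm_le_bound _ (by positivity)
  intro u
  set w := (E : ℂ →L[ℝ] ℂ) u with hw
  set v := (E.symm : ℂ →L[ℝ] ℂ) (Complex.I * w) with hv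
  have hEv : (E : ℂ →L[ℝ] ℂ) v = Complex.I * w := E.apply_symm_apply _
  have h1 : ‖w‖ ^ 2 = (E : ℂ →L[ℝ] ℂ).det * ω u v := by
    rw [← omega_self w, ← hEv, omega_E]
  have hvle : ‖v‖ ≤ ‖(E.symm : ℂ →L[ℝ] ℂ)‖ * ‖w‖ := by
    calc ‖v‖ ≤ ‖(E.symm : ℂ →L[ℝ] ℂ)‖ * ‖Complex.I * w‖ :=
      (E.symm : ℂ →L[ℝ] ℂ).le_opNorm _
    _ = ‖(E.symm : ℂ →L[ℝ] ℂ)‖ * ‖w‖ := by rw [norm_mul]; simp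
  have h2 : ‖w‖ * ‖w‖ ≤ |(E : ℂ →L[ℝ] ℂ).det| * ‖(E.symm : ℂ →L[ℝ] ℂ)‖ * ‖u‖ * ‖w‖ := by
    have h1' := h1; rw [sq] at h1'; rw [h1']
    calc (E : ℂ →L[ℝ] ℂ).det * ω u v ≤ |(E : ℂ →L[ℝ] ℂ).det| * |ω u v| := by
          rw [← abs_mul]; exact le_abs_self _
    _ ≤ |(E : ℂ →L[ℝ] ℂ).det| * (‖u‖ * ‖v‖) :=
        mul_le_mul_of_nonneg_left (omega_abs_le u v) (abs_nonneg _)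
    _ ≤ |(E : ℂ →L[ℝ] ℂ).det| * (‖u‖ * (‖(E.symm : ℂ →L[ℝ] ℂ)‖ * ‖w‖)) :=
        mul_le_mul_of_nonneg_left (mul_le_mul_of_nonneg_left hvle (norm_nonneg _)) (abs_nonneg _)
    _ = _ := by ring
  rcases eq_or_lt_of_le (norm_nonneg w) with h0 | h0
  · rw [← h0]; positivity
  · exact le_of_mul_le_mul_right h2 h0

lemma keysq (E : ℂ ≃L[ℝ] ℂ) (K : ℝ)
    (hK : ‖(E : ℂ →L[ℝ] ℂ)‖ * ‖(E.symm : ℂ →L[ℝ] ℂ)‖ ≤ K) :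
    ‖(E : ℂ →L[ℝ] ℂ)‖ ^ 2 ≤ K * |(E : ℂ →L[ℝ] ℂ).det| := by
  nlinarith [key E, norm_nonneg (E : ℂ →L[ℝ] ℂ), norm_nonneg (E.symm : ℂ →L[ℝ] ℂ),
    abs_nonneg (E : ℂ →L[ℝ] ℂ).det]

/-! rectangles -/

noncomputable def rect (a b : ℝ) : Set ℂ := {z : ℂ | z.re ∈ Set.Icc 0 a ∧ z.im ∈ Set.Icc 0 b}

lemma rect_eq (a b : ℝ) :
    rect a b = Complex.measurableEquivRealProd ⁻¹' (Icc 0 a ×ˢ Icc 0 b) := by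
  ext z
  simp only [rect, Set.mem_setOf_eq, Set.mem_preimage, Complex.measurableEquivRealProd_apply,
    Set.mem_prod]

lemma rect_closed (a b : ℝ) : IsClosed (rect a b) := by
  have : rect a b = Complex.re ⁻¹' Icc 0 a ∩ Complex.im ⁻¹' Icc 0 b := rfl
  rw [this]
  exact (isClosed_Icc.preimage Complex.continuous_re).inter
    (isClosed_Icc.preimage Complex.continuous_im)

lemma rect_compact (a b : ℝ) : IsCompact (rect a b) := by
  have h : rect a b = Complex.equivRealProdCLM.symm '' (Icc 0 a ×ˢ Icc 0 b) := by
    rw [rect_eq]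
    rw [← MeasurableEquiv.image_symm]
    rfl
  rw [h]
  exact ((isCompact_Icc).prod isCompact_Icc).image
    Complex.equivRealProdCLM.symm.continuous

lemma rect_convex (a b : ℝ) : Convex ℝ (rect a b) := by
  have : rect a b = Complex.reLm ⁻¹' Icc 0 a ∩ Complex.imLm ⁻¹' Icc 0 b := rfl
  rw [this]
  exact ((convex_Icc 0 a).linear_preimage _).inter ((convex_Icc 0 b).linear_preimage _)

lemma rect_interior (a b : ℝ) (ha : 0 < a) (hb : 0 < b) :
    (interior (rect a b)).Nonempty := by
  refine ⟨⟨a/2, b/2⟩, ?_⟩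
  have hopen : IsOpen {z : ℂ | z.re ∈ Ioo 0 a ∧ z.im ∈ Ioo 0 b} := by
    have : {z : ℂ | z.re ∈ Ioo 0 a ∧ z.im ∈ Ioo 0 b}
        = Complex.re ⁻¹' Ioo 0 a ∩ Complex.im ⁻¹' Ioo 0 b := rfl
    rw [this]
    exact (isOpen_Ioo.preimage Complex.continuous_re).inter
      (isOpen_Ioo.preimage Complex.continuous_im)
  have hsub : {z : ℂ | z.re ∈ Ioo 0 a ∧ z.im ∈ Ioo 0 b} ⊆ rect a b :=
    fun z hz => ⟨⟨hz.1.1.le, hz.1.2.le⟩, ⟨hz.2.1.le, hz.2.2.le⟩⟩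
  apply interior_maximal hsub hopen
  constructor <;> constructor <;> simp <;> linarith

lemma rect_uniqueDiffOn (a b : ℝ) (ha : 0 < a) (hb : 0 < b) : UniqueDiffOn ℝ (rect a b) :=
  uniqueDiffOn_convex (rect_convex a b) (rect_interior a b ha hb)

lemma rect_volume (a b : ℝ) :
    volume (rect a b) = ENNReal.ofReal a * ENNReal.ofReal b := by
  rw [rect_eq,
    Complex.volume_preserving_equiv_real_prod.measure_preimage
      ((measurableSet_Icc.prod measurableSet_Icc).nullMeasurableSet)]
  rw [Measure.volume_eq_prod, Measure.prod_prod, Real.volume_Icc, Real.volume_Icc, sub_zero,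
    sub_zero]



noncomputable def dmapL (α β : ℝ) : ℂ →ₗ[ℝ] ℂ where
  toFun z := ⟨α * z.re, β * z.im⟩
  map_add' z w := by simp [Complex.ext_iff]; constructor <;> ring
  map_smul' c z := by simp [Complex.ext_iff, Complex.smul_re, Complex.smul_im]; constructor <;> ring

@[simp] lemma dmapL_re (α β : ℝ) (z : ℂ) : (dmapL α β z).re = α * z.re := rfl
@[simp] lemma dmapL_im (α β : ℝ) (z : ℂ) : (dmapL α β z).im = β * z.im := rfl

noncomputable def dequiv (α β : ℝ) (hα : α ≠ 0) (hβ : β ≠ 0) : ℂ ≃ₗ[ℝ] ℂ :=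
  { dmapL α β with
    invFun := dmapL α⁻¹ β⁻¹
    left_inv := fun z => by simp [Complex.ext_iff, dmapL]; constructor <;> field_simp
    right_inv := fun z => by simp [Complex.ext_iff, dmapL]; constructor <;> field_simp }

noncomputable def dCLE (α β : ℝ) (hα : α ≠ 0) (hβ : β ≠ 0) : ℂ ≃L[ℝ] ℂ :=
  (dequiv α β hα hβ).toContinuousLinearEquiv

lemma dCLE_apply (α β : ℝ) (hα : α ≠ 0) (hβ : β ≠ 0) (z : ℂ) :
    dCLE α β hα hβ z = ⟨α * z.re, β * z.im⟩ := rfl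

lemma dCLE_symm (α β : ℝ) (hα : α ≠ 0) (hβ : β ≠ 0) :
    ((dCLE α β hα hβ).symm : ℂ →L[ℝ] ℂ) = ((dCLE α⁻¹ β⁻¹ (inv_ne_zero hα) (inv_ne_zero hβ)) : ℂ →L[ℝ] ℂ) := rfl

lemma norm_dCLE (α β : ℝ) (hα : α ≠ 0) (hβ : β ≠ 0) (h : |β| ≤ |α|) :
    ‖((dCLE α β hα hβ) : ℂ →L[ℝ] ℂ)‖ = |α| := by
  apply le_antisymm
  · apply ContinuousLinearMap.opNorm_le_bound _ (abs_nonneg _)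
    intro z
    have h1 : ‖(dCLE α β hα hβ) z‖ ^ 2 ≤ (|α| * ‖z‖) ^ 2 := by
      rw [← Complex.normSq_eq_norm_sq, mul_pow, ← Complex.normSq_eq_norm_sq]
      simp only [Complex.normSq_apply, dCLE_apply]
      have h2 : β ^ 2 ≤ α ^ 2 := by
        rw [← _root_.sq_abs, ← _root_.sq_abs α]
        exact pow_le_pow_left₀ (abs_nonneg _) h 2
      have h3 : |α| ^ 2 = α ^ 2 := _root_.sq_abs α
      nlinarith [sq_nonneg z.re, sq_nonneg z.im]
    calc ‖(dCLE α β hα hβ) z‖ ≤ |α| * ‖z‖ := by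
          nlinarith [norm_nonneg ((dCLE α β hα hβ) z), mul_nonneg (abs_nonneg α) (norm_nonneg z)]
    _ = _ := rfl
  · have h1 : (dCLE α β hα hβ) 1 = (α : ℂ) := by
      rw [dCLE_apply]; simp [Complex.ext_iff]
    calc |α| = ‖(dCLE α β hα hβ) 1‖ := by rw [h1, Complex.norm_real, Real.norm_eq_abs]
    _ ≤ ‖((dCLE α β hα hβ) : ℂ →L[ℝ] ℂ)‖ * ‖(1:ℂ)‖ :=
        (dCLE α β hα hβ : ℂ →L[ℝ] ℂ).le_opNorm 1
    _ = _ := by simp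


lemma line_lower (a b a' : ℝ) (ha : 0 < a) (f : ℂ → ℂ) (φ : ℂ → ℂ →L[ℝ] ℂ)
    (hf : ContinuousOn f (rect a b)) (hφcont : ContinuousOn φ (rect a b))
    (hφ : ∀ z ∈ rect a b, HasFDerivWithinAt f (φ z) (rect a b) z)
    (h0 : ∀ z ∈ rect a b, z.re = 0 → (f z).re = 0)
    (hA : ∀ z ∈ rect a b, z.re = a → (f z).re = a')
    {y : ℝ} (hy : y ∈ Icc 0 b) :
    a' ≤ ∫ x in Icc (0:ℝ) a, ‖φ (⟨x, y⟩ : ℂ)‖ := by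
  set ℓ : ℝ → ℂ := fun x => ⟨x, y⟩ with hℓ
  have hmem : MapsTo ℓ (Icc 0 a) (rect a b) := fun x hx => ⟨hx, hy⟩
  have hℓc : Continuous ℓ := by
    have : ℓ = fun x : ℝ => (x : ℂ) + (⟨0, y⟩ : ℂ) := by
      funext x; simp [hℓ, Complex.ext_iff]
    rw [this]; exact (Complex.continuous_ofReal.add continuous_const)
  have hℓd : ∀ x : ℝ, HasDerivAt ℓ 1 x := by
    intro x
    have h1 : HasDerivAt (fun x : ℝ => (x : ℂ)) 1 x := by
      simpa using (hasDerivAt_id x).ofReal_comp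
    have : ℓ = fun x : ℝ => (x : ℂ) + (⟨0, y⟩ : ℂ) := by
      funext x; simp [hℓ, Complex.ext_iff]
    rw [this]; exact h1.add_const _
  set g : ℝ → ℝ := fun x => (f (ℓ x)).re with hg
  set g' : ℝ → ℝ := fun x => ((φ (ℓ x)) 1).re with hg'
  have gd : ∀ x ∈ Icc (0:ℝ) a, HasDerivWithinAt g (g' x) (Icc 0 a) x := by
    intro x hx
    have step1 : HasDerivWithinAt (f ∘ ℓ) ((φ (ℓ x)) 1) (Icc 0 a) x :=
      (hφ _ (hmem hx)).comp_hasDerivWithinAt x (hℓd x).hasDerivWithinAt hmem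
    have step2 := Complex.reCLM.hasFDerivAt.comp_hasDerivWithinAt x step1
    exact step2
  have hgc : ContinuousOn g (Icc 0 a) :=
    Complex.continuous_re.comp_continuousOn (hf.comp hℓc.continuousOn hmem)
  have hg'c : ContinuousOn g' (Icc 0 a) :=
    Complex.continuous_re.comp_continuousOn
      ((hφcont.comp hℓc.continuousOn hmem).clm_apply continuousOn_const)
  have hint : IntervalIntegrable g' volume 0 a := by
    apply ContinuousOn.intervalIntegrable
    rwa [uIcc_of_le ha.le]
  have hftc : ∫ x in (0:ℝ)..a, g' x = g a - g 0 := by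
    apply intervalIntegral.integral_eq_sub_of_hasDeriv_right_of_le ha.le hgc _ hint
    intro x hx
    exact ((gd x ⟨hx.1.le, hx.2.le⟩).hasDerivAt (Icc_mem_nhds hx.1 hx.2)).hasDerivWithinAt
  have hga : g a = a' := hA (ℓ a) (hmem ⟨ha.le, le_rfl⟩) rfl
  have hg0 : g 0 = 0 := h0 (ℓ 0) (hmem ⟨le_rfl, ha.le⟩) rfl
  have hmono : ∫ x in (0:ℝ)..a, g' x ≤ ∫ x in (0:ℝ)..a, ‖φ (ℓ x)‖ := by
    apply intervalIntegral.integral_mono_on ha.le hint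
    · apply ContinuousOn.intervalIntegrable
      rw [uIcc_of_le ha.le]
      exact (hφcont.comp hℓc.continuousOn hmem).norm
    · intro x hx
      calc g' x ≤ |((φ (ℓ x)) 1).re| := le_abs_self _
      _ ≤ ‖(φ (ℓ x)) 1‖ := Complex.abs_re_le_norm _
      _ ≤ ‖φ (ℓ x)‖ * ‖(1:ℂ)‖ := (φ (ℓ x)).le_opNorm 1
      _ = ‖φ (ℓ x)‖ := by simp
  have key : a' ≤ ∫ x in (0:ℝ)..a, ‖φ (ℓ x)‖ := by
    have h1 : a' = ∫ x in (0:ℝ)..a, g' x := by rw [hftc, hga, hg0, sub_zero]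
    rw [h1]; exact hmono
  rwa [intervalIntegral.integral_of_le ha.le, ← integral_Icc_eq_integral_Ioc] at key


-- assume aux facts (proved elsewhere) as hypotheses to test assembly
lemma part2 (a b a' b' : ℝ) (ha : 0 < a) (hb : 0 < b) (ha' : 0 < a') (hb' : 0 < b')
    (f : ℂ → ℂ) (K : ℝ)
    (huniq : UniqueDiffOn ℝ (rect a b))
    (hcompact : IsCompact (rect a b))
    (hmeas : MeasurableSet (rect a b))
    (hvol : volume (rect a b) = ENNReal.ofReal a * ENNReal.ofReal b)
    (hvol' : volume (rect a' b') = ENNReal.ofReal a' * ENNReal.ofReal b')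
    (hrect_eq : rect a b = Complex.measurableEquivRealProd ⁻¹' (Icc 0 a ×ˢ Icc 0 b))
    (line_lower : ∀ (φ : ℂ → ℂ →L[ℝ] ℂ), ContinuousOn f (rect a b) →
      ContinuousOn φ (rect a b) →
      (∀ z ∈ rect a b, HasFDerivWithinAt f (φ z) (rect a b) z) →
      ∀ y ∈ Icc (0:ℝ) b, a' ≤ ∫ x in Icc (0:ℝ) a, ‖φ (⟨x, y⟩ : ℂ)‖)
    (keysq : ∀ (E : ℂ ≃L[ℝ] ℂ), ‖(E : ℂ →L[ℝ] ℂ)‖ * ‖(E.symm : ℂ →L[ℝ] ℂ)‖ ≤ K →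
      ‖(E : ℂ →L[ℝ] ℂ)‖ ^ 2 ≤ K * |(E : ℂ →L[ℝ] ℂ).det|)
    (hC : ContDiffOn ℝ 1 f (rect a b))
    (hbij : Set.BijOn f (rect a b) (rect a' b'))
    (hD : ∀ z ∈ rect a b, ∃ D : ℂ ≃L[ℝ] ℂ,
      HasFDerivWithinAt f (D : ℂ →L[ℝ] ℂ) (rect a b) z ∧
      ‖(D : ℂ →L[ℝ] ℂ)‖ * ‖(D.symm : ℂ →L[ℝ] ℂ)‖ ≤ K) :
    (a' / b') / (a / b) ≤ K := by
  classical
  set R := rect a b with hR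
  set N : ℂ → ℝ := fun z => ‖fderivWithin ℝ f R z‖ with hN
  set φ : ℂ → ℂ →L[ℝ] ℂ := fun z => fderivWithin ℝ f R z with hφ
  have hφd : ∀ z ∈ R, HasFDerivWithinAt f (φ z) R z := by
    intro z hz
    obtain ⟨D, hDz, -⟩ := hD z hz
    have : φ z = (D : ℂ →L[ℝ] ℂ) := hDz.fderivWithin (huniq z hz)
    rw [this]; exact hDz
  have hφcont : ContinuousOn φ R := hC.continuousOn_fderivWithin huniq le_rfl
  have hK0 : 0 ≤ K := by
    obtain ⟨D, -, hKz⟩ := hD 0 ⟨⟨le_rfl, ha.le⟩, ⟨le_rfl, hb.le⟩⟩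
    exact le_trans (by positivity) hKz
  have hfc : ContinuousOn f R := hC.continuousOn
  -- integrability
  have hNint : IntegrableOn N R := (hφcont.norm).integrableOn_compact hcompact
  have hN2int : IntegrableOn (fun z => N z ^ 2) R :=
    ((hφcont.norm).pow 2).integrableOn_compact hcompact
  have hdetcont : ContinuousOn (fun z => |(φ z).det|) R :=
    (ContinuousLinearMap.continuous_det.comp_continuousOn hφcont).abs
  have hdetint : IntegrableOn (fun z => |(φ z).det|) R := hdetcont.integrableOn_compact hcompact
  -- Step 1 : a' * b ≤ ∫ z in R, N z
  have step1 : a' * b ≤ ∫ z in R, N z := by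
    set e := Complex.measurableEquivRealProd with he
    set S : Set (ℝ × ℝ) := Icc 0 a ×ˢ Icc 0 b with hS
    set h : ℝ × ℝ → ℝ := fun p => N (e.symm p) with hh
    have hesymm : ∀ p : ℝ × ℝ, (e.symm p : ℂ) = ⟨p.1, p.2⟩ := fun p => by
      simp [he, Complex.ext_iff]
    have hmapsS : MapsTo e.symm S R := by
      intro p hp
      rw [hrect_eq, mem_preimage]
      simpa using hp
    have hhcont : ContinuousOn h S := by
      have hec : Continuous (e.symm : ℝ × ℝ → ℂ) :=
        Complex.equivRealProdCLM.symm.continuous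
      exact (hφcont.norm).comp hec.continuousOn hmapsS
    have hScompact : IsCompact S := isCompact_Icc.prod isCompact_Icc
    have hhint : IntegrableOn h S := hhcont.integrableOn_compact hScompact
    have h1 : ∫ z in R, N z = ∫ p in S, h p := by
      rw [hrect_eq]
      rw [← Complex.volume_preserving_equiv_real_prod.setIntegral_preimage_emb
        e.measurableEmbedding h S]
      simp [hh, he]
    have hhint' : Integrable h ((volume.restrict (Icc (0:ℝ) a)).prod (volume.restrict (Icc (0:ℝ) b))) := by
      rw [Measure.prod_restrict]
      rw [Measure.volume_eq_prod] at hhint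
      exact hhint
    have h2 : ∫ p in S, h p = ∫ y in Icc (0:ℝ) b, ∫ x in Icc (0:ℝ) a, h (x, y) := by
      rw [Measure.volume_eq_prod, hS, ← Measure.prod_restrict]
      exact integral_prod_symm h hhint'
    have hinner_int : IntegrableOn (fun y => ∫ x in Icc (0:ℝ) a, h (x, y)) (Icc (0:ℝ) b) :=
      hhint'.integral_prod_right
    have h3 : ∀ y ∈ Icc (0:ℝ) b, a' ≤ ∫ x in Icc (0:ℝ) a, h (x, y) := by
      intro y hy
      exact line_lower φ hfc hφcont hφd y hy
    have h4 : a' * b ≤ ∫ y in Icc (0:ℝ) b, ∫ x in Icc (0:ℝ) a, h (x, y) := by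
      have := setIntegral_mono_on (integrableOn_const (by
        rw [Real.volume_Icc]; exact ENNReal.ofReal_ne_top)) hinner_int measurableSet_Icc h3
      calc a' * b = (volume (Icc (0:ℝ) b)).toReal • a' := by
            rw [Real.volume_Icc, sub_zero, ENNReal.toReal_ofReal hb.le]; simp [mul_comm]
      _ = ∫ _ in Icc (0:ℝ) b, a' := (setIntegral_const a').symm
      _ ≤ _ := this
    rw [h1, h2]; exact h4
  -- Step 2 : Cauchy-Schwarz
  have hmR : (volume R).toReal = a * b := by
    rw [hR] at *
    rw [hvol, ← ENNReal.ofReal_mul ha.le, ENNReal.toReal_ofReal (by positivity)]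
  have hRfin : volume R < ⊤ := hcompact.measure_lt_top
  have step2 : (∫ z in R, N z) ^ 2 ≤ (a * b) * ∫ z in R, N z ^ 2 := by
    set X := ∫ z in R, N z with hX
    set c : ℝ := X / (a * b) with hc
    have hcint : IntegrableOn (fun _ : ℂ => c) R := integrableOn_const hRfin.ne
    have hNc : IntegrableOn (fun z => N z * c) R := hNint.mul_const c
    have hnonneg : 0 ≤ ∫ z in R, (N z - c) ^ 2 :=
      setIntegral_nonneg hmeas fun z _ => sq_nonneg _
    have hexp : ∫ z in R, (N z - c) ^ 2
        = (∫ z in R, N z ^ 2) - 2 * c * X + c ^ 2 * (a * b) := by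
      have : (fun z => (N z - c) ^ 2) = fun z => N z ^ 2 - (2 * c) * N z + c ^ 2 := by
        funext z; ring
      have hsubint : IntegrableOn (fun z => N z ^ 2 - 2 * c * N z) R :=
        hN2int.sub (hNint.const_mul (2*c))
      have hc2int : IntegrableOn (fun _ : ℂ => c ^ 2) R := integrableOn_const hRfin.ne
      rw [this, integral_add hsubint hc2int,
        integral_sub hN2int (hNint.const_mul (2*c)),
        integral_const_mul, setIntegral_const, smul_eq_mul, measureReal_def, hmR]
      ring
    have hab : (0:ℝ) < a * b := by positivity
    rw [hexp] at hnonneg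
    rw [hc] at hnonneg
    have h5 : (∫ z in R, N z ^ 2) - 2 * (X / (a*b)) * X + (X / (a*b))^2 * (a*b)
        = (∫ z in R, N z ^ 2) - X^2/(a*b) := by field_simp; ring
    rw [h5] at hnonneg
    have h6 := (div_le_iff₀ hab).mp (by linarith : X^2/(a*b) ≤ ∫ z in R, N z ^ 2)
    linarith [h6]
  -- Step 3 : ∫ N² ≤ K ∫ |det|
  have step3 : ∫ z in R, N z ^ 2 ≤ K * ∫ z in R, |(φ z).det| := by
    rw [← integral_const_mul]
    apply setIntegral_mono_on hN2int (hdetint.const_mul K) hmeas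
    intro z hz
    obtain ⟨D, hDz, hKz⟩ := hD z hz
    have hφz : φ z = (D : ℂ →L[ℝ] ℂ) := hDz.fderivWithin (huniq z hz)
    have := keysq D hKz
    rw [hN, hφ] at *
    simp only [hφz]
    exact this
  -- Step 4 : ∫ |det| ≤ a' * b'
  have step4 : ∫ z in R, |(φ z).det| ≤ a' * b' := by
    have hcv := lintegral_abs_det_fderiv_le_addHaar_image volume hmeas hφd hbij.injOn
    rw [hbij.image_eq, hvol'] at hcv
    have heq : ENNReal.ofReal (∫ z in R, |(φ z).det|)
        = ∫⁻ z in R, ENNReal.ofReal |(φ z).det| := by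
      apply MeasureTheory.ofReal_integral_eq_lintegral_ofReal hdetint
      exact Filter.Eventually.of_forall fun z => abs_nonneg _
    have : ENNReal.ofReal (∫ z in R, |(φ z).det|) ≤ ENNReal.ofReal (a' * b') := by
      rw [heq, ENNReal.ofReal_mul ha'.le]
      exact hcv
    exact (ENNReal.ofReal_le_ofReal_iff (by positivity)).mp this
  -- combine
  have hX1 : a' * b ≤ ∫ z in R, N z := step1
  have hchain : (a' * b) ^ 2 ≤ (a * b) * (K * (a' * b')) := by
    calc (a' * b) ^ 2 ≤ (∫ z in R, N z) ^ 2 := by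
          apply pow_le_pow_left₀ (by positivity) hX1
    _ ≤ (a * b) * ∫ z in R, N z ^ 2 := step2
    _ ≤ (a * b) * (K * ∫ z in R, |(φ z).det|) := by
        apply mul_le_mul_of_nonneg_left step3 (by positivity)
    _ ≤ (a * b) * (K * (a' * b')) := by
        apply mul_le_mul_of_nonneg_left (mul_le_mul_of_nonneg_left step4 hK0) (by positivity)
  have hgoal : (a' / b') / (a / b) = (a' * b) / (b' * a) := by field_simp
  rw [hgoal, div_le_iff₀ (by positivity)]
  nlinarith [hchain, mul_pos ha' hb, mul_pos ha hb, mul_pos ha' hb']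
end Stmt6Aux

namespace Stmt6Aux

lemma norm_dCLE' (α β : ℝ) (hα : α ≠ 0) (hβ : β ≠ 0) (h : |α| ≤ |β|) :
    ‖((dCLE α β hα hβ) : ℂ →L[ℝ] ℂ)‖ = |β| := by
  apply le_antisymm
  · apply ContinuousLinearMap.opNorm_le_bound _ (abs_nonneg _)
    intro z
    have h1 : ‖(dCLE α β hα hβ) z‖ ^ 2 ≤ (|β| * ‖z‖) ^ 2 := by
      rw [← Complex.normSq_eq_norm_sq, mul_pow, ← Complex.normSq_eq_norm_sq]
      simp only [Complex.normSq_apply, dCLE_apply]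
      have h2 : α ^ 2 ≤ β ^ 2 := by
        rw [← _root_.sq_abs, ← _root_.sq_abs β]
        exact pow_le_pow_left₀ (abs_nonneg _) h 2
      have h3 : |β| ^ 2 = β ^ 2 := _root_.sq_abs β
      nlinarith [sq_nonneg z.re, sq_nonneg z.im]
    calc ‖(dCLE α β hα hβ) z‖ ≤ |β| * ‖z‖ := by
          nlinarith [norm_nonneg ((dCLE α β hα hβ) z), mul_nonneg (abs_nonneg β) (norm_nonneg z)]
    _ = _ := rfl
  · have h1 : (dCLE α β hα hβ) Complex.I = β * Complex.I := by
      rw [dCLE_apply]; simp [Complex.ext_iff]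
    calc |β| = ‖(dCLE α β hα hβ) Complex.I‖ := by
          rw [h1, norm_mul, Complex.norm_real, Real.norm_eq_abs]; simp
    _ ≤ ‖((dCLE α β hα hβ) : ℂ →L[ℝ] ℂ)‖ * ‖Complex.I‖ :=
        (dCLE α β hα hβ : ℂ →L[ℝ] ℂ).le_opNorm Complex.I
    _ = _ := by simp

end Stmt6Aux


open Stmt6Aux in
/-- Extremality of the affine map between rectangles: when `a'/b' ≥ a/b`, the affine map
`(x,y) ↦ ((a'/a)x, (b'/b)y)` has constant dilatation quotient `K₀ = (a'/b')/(a/b)`, and every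
C¹ side-respecting diffeomorphism between the rectangles has sup of dilatation quotient `≥ K₀`. -/
theorem stmt6 (a b a' b' : ℝ) (ha : 0 < a) (hb : 0 < b) (ha' : 0 < a') (hb' : 0 < b')
    (hmod : a / b ≤ a' / b') :
    (∀ z : ℂ, ∃ D : ℂ ≃L[ℝ] ℂ,
      HasFDerivAt (fun w : ℂ => (↑((a' / a) * w.re) + ↑((b' / b) * w.im) * Complex.I : ℂ))
        (D : ℂ →L[ℝ] ℂ) z ∧
      ‖(D : ℂ →L[ℝ] ℂ)‖ * ‖(D.symm : ℂ →L[ℝ] ℂ)‖ = (a' / b') / (a / b)) ∧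
    (∀ (f : ℂ → ℂ) (K : ℝ),
      ContDiffOn ℝ 1 f {z : ℂ | z.re ∈ Set.Icc 0 a ∧ z.im ∈ Set.Icc 0 b} →
      Set.BijOn f {z : ℂ | z.re ∈ Set.Icc 0 a ∧ z.im ∈ Set.Icc 0 b}
        {z : ℂ | z.re ∈ Set.Icc 0 a' ∧ z.im ∈ Set.Icc 0 b'} →
      (∀ z ∈ {z : ℂ | z.re ∈ Set.Icc 0 a ∧ z.im ∈ Set.Icc 0 b}, z.re = 0 → (f z).re = 0) →
      (∀ z ∈ {z : ℂ | z.re ∈ Set.Icc 0 a ∧ z.im ∈ Set.Icc 0 b}, z.re = a → (f z).re = a') →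
      (∀ z ∈ {z : ℂ | z.re ∈ Set.Icc 0 a ∧ z.im ∈ Set.Icc 0 b}, z.im = 0 → (f z).im = 0) →
      (∀ z ∈ {z : ℂ | z.re ∈ Set.Icc 0 a ∧ z.im ∈ Set.Icc 0 b}, z.im = b → (f z).im = b') →
      (∀ z ∈ {z : ℂ | z.re ∈ Set.Icc 0 a ∧ z.im ∈ Set.Icc 0 b}, ∃ D : ℂ ≃L[ℝ] ℂ,
        HasFDerivWithinAt f (D : ℂ →L[ℝ] ℂ)
          {z : ℂ | z.re ∈ Set.Icc 0 a ∧ z.im ∈ Set.Icc 0 b} z ∧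
        ‖(D : ℂ →L[ℝ] ℂ)‖ * ‖(D.symm : ℂ →L[ℝ] ℂ)‖ ≤ K) →
      (a' / b') / (a / b) ≤ K) := by
  have hα : (a' / a) ≠ 0 := ne_of_gt (by positivity)
  have hβ : (b' / b) ≠ 0 := ne_of_gt (by positivity)
  have hord : |b' / b| ≤ |a' / a| := by
    rw [abs_of_pos (by positivity), abs_of_pos (by positivity)]
    rw [div_le_div_iff₀ hb ha]
    have := (div_le_div_iff₀ hb hb').mp hmod
    nlinarith
  constructor
  · intro z
    refine ⟨dCLE (a'/a) (b'/b) hα hβ, ?_, ?_⟩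
    · have hfun : (fun w : ℂ => (↑((a' / a) * w.re) + ↑((b' / b) * w.im) * Complex.I : ℂ))
          = ⇑((dCLE (a'/a) (b'/b) hα hβ : ℂ →L[ℝ] ℂ)) := by
        funext w
        rw [show ((dCLE (a'/a) (b'/b) hα hβ : ℂ →L[ℝ] ℂ)) w
          = (⟨(a'/a) * w.re, (b'/b) * w.im⟩ : ℂ) from rfl]
        simp [Complex.ext_iff]
      rw [hfun]
      exact (dCLE (a'/a) (b'/b) hα hβ : ℂ →L[ℝ] ℂ).hasFDerivAt
    · rw [norm_dCLE _ _ hα hβ hord, dCLE_symm]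
      have hord' : |(a'/a)⁻¹| ≤ |(b'/b)⁻¹| := by
        rw [abs_inv, abs_inv]
        have hβpos : 0 < |b'/b| := abs_pos.mpr hβ
        exact inv_anti₀ hβpos hord
      rw [norm_dCLE' _ _ (inv_ne_zero hα) (inv_ne_zero hβ) hord']
      rw [abs_of_pos (by positivity), abs_inv, abs_of_pos (by positivity)]
      field_simp
  · intro f K hC hbij hs1 hs2 hs3 hs4 hD
    have hRdef : {z : ℂ | z.re ∈ Set.Icc 0 a ∧ z.im ∈ Set.Icc 0 b} = rect a b := rfl
    have hRdef' : {z : ℂ | z.re ∈ Set.Icc 0 a' ∧ z.im ∈ Set.Icc 0 b'} = rect a' b' := rfl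
    rw [hRdef] at hC hbij hs1 hs2 hs3 hs4 hD
    rw [hRdef'] at hbij
    exact part2 a b a' b' ha hb ha' hb' f K
      (rect_uniqueDiffOn a b ha hb) (rect_compact a b)
      (rect_closed a b).measurableSet (rect_volume a b) (rect_volume a' b')
      (rect_eq a b)
      (fun φ hfc hφc hφd y hy => line_lower a b a' ha f φ hfc hφc hφd hs1 hs2 hy)
      (fun E hE => keysq E K hE) hC hbij hD
end
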